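/- Let 0 = x_0 < x_1 < ⋯ < x_N = 1 be a partition of [0,1], let ε > 0, let a ∈ C¹([0,1]) with a(x) ≥ β > 0, let b be continuous with b(x) − a′(x)/2 ≥ γ > 0 on [0,1], and let ρ(x_i) ≥ 0 for 0 ≤ i ≤ N. Then for every v ∈ V_N^k one has B(v, v) ≥ ‖v‖²_{NIPG}. -/

import Mathlib

open Set Finset

/-- The jump `[w(x_i)]` of a broken function at node `x_i`, where `w i` is the
(smooth) representative of the broken function on the element `I_i = [x_{i−1}, x_i]`
(elements indexed `1, …, N`).  Conventions: `[w(x_0)] = −w(x_0^+)`, `[w(x_N)] = w(x_N^−)`,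
and `[w(x_i)] = w(x_i^−) − w(x_i^+)` for interior nodes. -/
noncomputable def brokenJump (N : ℕ) (x : ℕ → ℝ) (w : ℕ → ℝ → ℝ) (i : ℕ) : ℝ :=
  if i = 0 then -(w 1 (x 0))
  else if i = N then w N (x N)
  else w i (x i) - w (i + 1) (x i)

/-- The average `{w(x_i)}` of a broken function at node `x_i`.  Conventions:
`{w(x_0)} = w(x_0^+)`, `{w(x_N)} = w(x_N^−)`, and
`{w(x_i)} = (w(x_i^+) + w(x_i^−))/2` for interior nodes. -/
noncomputable def brokenAvg (N : ℕ) (x : ℕ → ℝ) (w : ℕ → ℝ → ℝ) (i : ℕ) : ℝ :=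
  if i = 0 then w 1 (x 0)
  else if i = N then w N (x N)
  else (w (i + 1) (x i) + w i (x i)) / 2

/-- The NIPG bilinear form `B(u, v)`; `u, v` are broken functions given by their
elementwise representatives `u i, v i` on `I_i = [x_{i−1}, x_i]` together with the
elementwise derivatives `u' i, v' i`. -/
noncomputable def nipgB (N : ℕ) (x : ℕ → ℝ) (ε : ℝ) (a b : ℝ → ℝ) (ρ : ℕ → ℝ)
    (u u' v v' : ℕ → ℝ → ℝ) : ℝ :=
  (∑ i ∈ Finset.Icc 1 N, ∫ t in (x (i - 1))..(x i), ε * u' i t * v' i t)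
  - ε * ∑ i ∈ Finset.Icc 0 N, brokenAvg N x u' i * brokenJump N x v i
  + ε * ∑ i ∈ Finset.Icc 0 N, brokenAvg N x v' i * brokenJump N x u i
  + ∑ i ∈ Finset.Icc 0 N, ρ i * brokenJump N x u i * brokenJump N x v i
  + (∑ i ∈ Finset.Icc 1 N, ∫ t in (x (i - 1))..(x i), a t * u' i t * v i t)
  - (∑ i ∈ Finset.Icc 0 (N - 1), a (x i) * brokenJump N x u i * v (i + 1) (x i))
  + ∑ i ∈ Finset.Icc 1 N, ∫ t in (x (i - 1))..(x i), b t * u i t * v i t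

/-- The square of the NIPG energy norm
`‖v‖²_{NIPG} = ε Σ‖v′‖²_{L²(I_i)} + γ Σ‖v‖²_{L²(I_i)} + Σ ρ(x_i)[v(x_i)]²`. -/
noncomputable def nipgNormSq (N : ℕ) (x : ℕ → ℝ) (ε γ : ℝ) (ρ : ℕ → ℝ)
    (v v' : ℕ → ℝ → ℝ) : ℝ :=
  ε * (∑ i ∈ Finset.Icc 1 N, ∫ t in (x (i - 1))..(x i), (v' i t) ^ 2)
  + γ * (∑ i ∈ Finset.Icc 1 N, ∫ t in (x (i - 1))..(x i), (v i t) ^ 2)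
  + ∑ i ∈ Finset.Icc 0 N, ρ i * (brokenJump N x v i) ^ 2

/-- Coercivity of the NIPG bilinear form: `B(v, v) ≥ ‖v‖²_{NIPG}` for every
`v ∈ V_N^k` (a broken function that is a polynomial of degree at most `k` on each
element of the partition `0 = x_0 < x_1 < ⋯ < x_N = 1`). -/

private lemma keylem (a a' b : ℝ → ℝ) (γ : ℝ)
    (ha : ∀ t ∈ Icc (0:ℝ) 1, HasDerivWithinAt a (a' t) (Icc 0 1) t)
    (ha' : ContinuousOn a' (Icc 0 1)) (hb : ContinuousOn b (Icc 0 1))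
    (hbγ : ∀ t ∈ Icc (0:ℝ) 1, γ ≤ b t - a' t / 2)
    (c d : ℝ) (hcd : c < d) (hsub : Icc c d ⊆ Icc 0 1) (q : Polynomial ℝ) :
    a d * (q.eval d)^2/2 - a c * (q.eval c)^2/2 + γ * (∫ t in c..d, (q.eval t)^2)
      ≤ (∫ t in c..d, a t * (q.derivative.eval t) * (q.eval t))
        + ∫ t in c..d, b t * (q.eval t) * (q.eval t) := by
  have haC : ContinuousOn a (Icc 0 1) := fun t ht => (ha t ht).continuousWithinAt
  have huIcc : uIcc c d = Icc c d := uIcc_of_le hcd.le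
  have hq : Continuous fun t => q.eval t := q.continuous
  have hq' : Continuous fun t => q.derivative.eval t := q.derivative.continuous
  have hcI : c ∈ Icc (0:ℝ) 1 := hsub (left_mem_Icc.mpr hcd.le)
  have hdI : d ∈ Icc (0:ℝ) 1 := hsub (right_mem_Icc.mpr hcd.le)
  have I1 : IntervalIntegrable (fun t => a t * q.derivative.eval t * q.eval t)
      MeasureTheory.volume c d := by
    apply ContinuousOn.intervalIntegrable
    rw [huIcc]
    exact ((haC.mono hsub).mul hq'.continuousOn).mul hq.continuousOn
  have I2 : IntervalIntegrable (fun t => a' t * (q.eval t)^2 / 2)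
      MeasureTheory.volume c d := by
    apply ContinuousOn.intervalIntegrable
    rw [huIcc]
    exact ((ha'.mono hsub).mul (hq.pow 2).continuousOn).div_const 2
  have I3 : IntervalIntegrable (fun t => b t * q.eval t * q.eval t)
      MeasureTheory.volume c d := by
    apply ContinuousOn.intervalIntegrable
    rw [huIcc]
    exact ((hb.mono hsub).mul hq.continuousOn).mul hq.continuousOn
  have I4 : IntervalIntegrable (fun t => γ * (q.eval t)^2) MeasureTheory.volume c d :=
    (continuous_const.mul (hq.pow 2)).intervalIntegrable c d
  have hFTC : (∫ t in c..d, (a' t * (q.eval t)^2 / 2 + a t * (q.derivative.eval t) * (q.eval t)))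
      = a d * (q.eval d)^2/2 - a c * (q.eval c)^2/2 := by
    apply intervalIntegral.integral_eq_sub_of_hasDeriv_right_of_le hcd.le
    · exact ((haC.mono hsub).mul (hq.pow 2).continuousOn).div_const 2
    · intro t ht
      have htI : t ∈ Icc (0:ℝ) 1 := hsub (Ioo_subset_Icc_self ht)
      have hmem : Icc (0:ℝ) 1 ∈ nhds t :=
        Icc_mem_nhds (lt_of_le_of_lt hcI.1 ht.1) (lt_of_lt_of_le ht.2 hdI.2)
      have haAt : HasDerivAt a (a' t) t := (ha t htI).hasDerivAt hmem
      have hqd : HasDerivAt (fun t => (q.eval t)^2)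
          (2 * q.eval t * q.derivative.eval t) t := by
        have := (q.hasDerivAt t).fun_pow 2
        simpa using this
      have hF : HasDerivAt (fun t => a t * (q.eval t)^2 / 2)
          ((a' t * (q.eval t)^2 + a t * (2 * q.eval t * q.derivative.eval t)) / 2) t :=
        (haAt.mul hqd).div_const 2
      have h2 : (a' t * (q.eval t)^2 + a t * (2 * q.eval t * q.derivative.eval t)) / 2
          = a' t * (q.eval t)^2/2 + a t * q.derivative.eval t * q.eval t := by ring
      exact (h2 ▸ hF).hasDerivWithinAt
    · exact I2.add I1
  have hsplit : (∫ t in c..d, (a' t * (q.eval t)^2 / 2 + a t * (q.derivative.eval t) * (q.eval t)))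
      = (∫ t in c..d, a' t * (q.eval t)^2 / 2)
        + ∫ t in c..d, a t * (q.derivative.eval t) * (q.eval t) :=
    intervalIntegral.integral_add I2 I1
  have hmono : (∫ t in c..d, (γ * (q.eval t)^2 + a' t * (q.eval t)^2/2))
      ≤ ∫ t in c..d, b t * q.eval t * q.eval t := by
    apply intervalIntegral.integral_mono_on hcd.le (I4.add I2) I3
    intro t ht
    have hγb := hbγ t (hsub ht)
    nlinarith [sq_nonneg (q.eval t), mul_le_mul_of_nonneg_right
      (show γ + a' t / 2 ≤ b t by linarith) (sq_nonneg (q.eval t))]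
  have hsplit2 : (∫ t in c..d, (γ * (q.eval t)^2 + a' t * (q.eval t)^2/2))
      = γ * (∫ t in c..d, (q.eval t)^2) + ∫ t in c..d, a' t * (q.eval t)^2/2 := by
    rw [intervalIntegral.integral_add I4 I2, intervalIntegral.integral_const_mul]
  linarith

private lemma boundary (M : ℕ) (A C Bq : ℕ → ℝ)
    (h : ∀ j < M, C (j+1) + Bq (j+1) ≤ A (j+1)) (h0 : C 0 + Bq 0 ≤ 0)
    (hM : 0 ≤ A (M+1)) :
    ∑ j ∈ Finset.range (M+1), Bq j ≤ ∑ j ∈ Finset.range (M+1), (A (j+1) - C j) := by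
  have e : ∑ j ∈ Finset.range (M+1), (A (j+1) - C j) - ∑ j ∈ Finset.range (M+1), Bq j
      = ∑ j ∈ Finset.range (M+1), A (j+1)
        - ∑ j ∈ Finset.range (M+1), (C j + Bq j) := by
    rw [← Finset.sum_sub_distrib, ← Finset.sum_sub_distrib]
    exact Finset.sum_congr rfl fun j _ => by ring
  rw [← sub_nonneg, e, Finset.sum_range_succ,
    Finset.sum_range_succ' (fun j => C j + Bq j)]
  have hs := Finset.sum_le_sum fun j hj => h j (Finset.mem_range.mp hj)
  linarith

theorem statement2 (N k : ℕ) (hN : 1 ≤ N) (x : ℕ → ℝ)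
    (hx0 : x 0 = 0) (hxN : x N = 1) (hmono : ∀ i < N, x i < x (i + 1))
    (ε β γ : ℝ) (hε : 0 < ε) (hβ : 0 < β) (hγ : 0 < γ)
    (a a' b : ℝ → ℝ)
    (ha : ∀ t ∈ Icc (0:ℝ) 1, HasDerivWithinAt a (a' t) (Icc 0 1) t)
    (ha' : ContinuousOn a' (Icc 0 1))
    (haβ : ∀ t ∈ Icc (0:ℝ) 1, β ≤ a t)
    (hb : ContinuousOn b (Icc 0 1))
    (hbγ : ∀ t ∈ Icc (0:ℝ) 1, γ ≤ b t - a' t / 2)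
    (ρ : ℕ → ℝ) (hρ : ∀ i, 0 ≤ ρ i)
    (p : ℕ → Polynomial ℝ) (hp : ∀ i, (p i).natDegree ≤ k) :
    nipgNormSq N x ε γ ρ
        (fun i t => (p i).eval t) (fun i t => ((p i).derivative).eval t)
      ≤ nipgB N x ε a b ρ
        (fun i t => (p i).eval t) (fun i t => ((p i).derivative).eval t)
        (fun i t => (p i).eval t) (fun i t => ((p i).derivative).eval t) := by

  obtain ⟨M, rfl⟩ : ∃ M, N = M + 1 := ⟨N - 1, (Nat.succ_pred_eq_of_pos hN).symm⟩
  -- monotonicity of nodes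
  have hmo : ∀ j, j ≤ M + 1 → ∀ i, i ≤ j → x i ≤ x j := by
    intro j
    induction j with
    | zero =>
      intro _ i hi
      have : i = 0 := by omega
      simp [this]
    | succ n ih =>
      intro hn i hi
      rcases Nat.lt_or_ge i (n+1) with h | h
      · exact le_trans (ih (by omega) i (by omega)) (hmono n (by omega)).le
      · have : i = n + 1 := by omega
        simp [this]
  have hxI : ∀ i, i ≤ M + 1 → x i ∈ Icc (0:ℝ) 1 := by
    intro i hi
    constructor
    · rw [← hx0]; exact hmo i hi 0 (Nat.zero_le _)
    · rw [← hxN]; exact hmo (M+1) le_rfl i hi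
  have hlt : ∀ i ∈ Finset.Icc 1 (M+1), x (i-1) < x i := by
    intro i hi
    simp only [Finset.mem_Icc] at hi
    have h : (i - 1) + 1 = i := by omega
    have := hmono (i-1) (by omega)
    rwa [h] at this
  have hsub : ∀ i ∈ Finset.Icc 1 (M+1), Icc (x (i-1)) (x i) ⊆ Icc (0:ℝ) 1 := by
    intro i hi
    simp only [Finset.mem_Icc] at hi
    exact Icc_subset_Icc (hxI (i-1) (by omega)).1 (hxI i (by omega)).2
  simp only [nipgNormSq, nipgB]
  -- the ε·v'·v' integral equals ε times the L² norm of v'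
  have hA : (∑ i ∈ Finset.Icc 1 (M+1), ∫ t in (x (i-1))..(x i),
        ε * (p i).derivative.eval t * (p i).derivative.eval t)
      = ε * ∑ i ∈ Finset.Icc 1 (M+1), ∫ t in (x (i-1))..(x i),
        ((p i).derivative.eval t) ^ 2 := by
    rw [Finset.mul_sum]
    refine Finset.sum_congr rfl fun i _ => ?_
    rw [← intervalIntegral.integral_const_mul]
    refine intervalIntegral.integral_congr fun t _ => ?_
    ring
  -- the jump penalty terms agree
  have hB : (∑ i ∈ Finset.Icc 0 (M+1),
        ρ i * brokenJump (M+1) x (fun i t => (p i).eval t) i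
          * brokenJump (M+1) x (fun i t => (p i).eval t) i)
      = ∑ i ∈ Finset.Icc 0 (M+1),
        ρ i * (brokenJump (M+1) x (fun i t => (p i).eval t) i) ^ 2 :=
    Finset.sum_congr rfl fun i _ => by ring
  -- element-wise coercivity of the convection + reaction part
  have hsumkey := Finset.sum_le_sum fun i hi =>
    keylem a a' b γ ha ha' hb hbγ (x (i-1)) (x i) (hlt i hi) (hsub i hi) (p i)
  rw [Finset.sum_add_distrib, Finset.sum_add_distrib, ← Finset.mul_sum] at hsumkey
  rw [Finset.sum_sub_distrib] at hsumkey
  -- boundary terms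
  have e0 : Finset.Icc 0 M = Finset.range (M+1) := by
    rw [← Finset.Ico_add_one_right_eq_Icc, Nat.Ico_zero_eq_range]
  have hD : (∑ i ∈ Finset.Icc 0 (M + 1 - 1),
        a (x i) * brokenJump (M+1) x (fun i t => (p i).eval t) i * (p (i+1)).eval (x i))
      ≤ ∑ i ∈ Finset.Icc 1 (M+1),
          (a (x i) * ((p i).eval (x i))^2/2 - a (x (i-1)) * ((p i).eval (x (i-1)))^2/2) := by
    have e1 : (∑ i ∈ Finset.Icc 1 (M+1),
          (a (x i) * ((p i).eval (x i))^2/2 - a (x (i-1)) * ((p i).eval (x (i-1)))^2/2))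
        = ∑ j ∈ Finset.range (M+1),
          ((fun m => a (x m) * ((p m).eval (x m))^2/2) (j+1)
            - (fun j => a (x j) * ((p (j+1)).eval (x j))^2/2) j) := by
      rw [← Finset.Ico_add_one_right_eq_Icc, Finset.sum_Ico_eq_sum_range]
      refine Finset.sum_congr (by norm_num) fun j _ => ?_
      have h1 : 1 + j = j + 1 := by omega
      have h2 : (j + 1) - 1 = j := by omega
      rw [h1, h2]
    have e2 : M + 1 - 1 = M := by omega
    rw [e2, e0, e1]
    refine boundary M (fun m => a (x m) * ((p m).eval (x m))^2/2)
      (fun j => a (x j) * ((p (j+1)).eval (x j))^2/2)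
      (fun j => a (x j) * brokenJump (M+1) x (fun i t => (p i).eval t) j
        * (p (j+1)).eval (x j)) ?_ ?_ ?_
    · intro j hj
      have hj1 : j + 1 ≠ 0 := by omega
      have hj2 : j + 1 ≠ M + 1 := by omega
      have hJ : brokenJump (M+1) x (fun i t => (p i).eval t) (j+1)
          = (p (j+1)).eval (x (j+1)) - (p (j+2)).eval (x (j+1)) := by
        simp [brokenJump, hj1, hj2, show j ≠ M by omega]
      simp only [hJ]
      have haa : 0 ≤ a (x (j+1)) := le_trans hβ.le (haβ _ (hxI (j+1) (by omega)))
      nlinarith [sq_nonneg ((p (j+1)).eval (x (j+1)) - (p (j+2)).eval (x (j+1))), haa]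
    · have hJ0 : brokenJump (M+1) x (fun i t => (p i).eval t) 0
          = -((p 1).eval (x 0)) := by simp [brokenJump]
      simp only [hJ0]
      have h2 : 0 ≤ a (x 0) := le_trans hβ.le (haβ _ (hxI 0 (by omega)))
      nlinarith [sq_nonneg ((p 1).eval (x 0))]
    · have h1 : 0 ≤ a (x (M+1)) := le_trans hβ.le (haβ _ (hxI (M+1) le_rfl))
      positivity
  rw [Finset.sum_sub_distrib] at hD
  linarith [hsumkey, hD, hA, hB]
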